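/- For colored compositions in which a part of size n corresponds to a multiset of n balls colored with N available colors, the part generating function is P(z) = (1-z)^{-N} - 1, and the radius of convergence of the sequence generating function 1/(1-P(z)) is r = 1 - 2^{-1/N}, the smallest positive root of (1-z)^{-N} = 2. -/

import Mathlib

open Finset

/-- The number of colored compositions of `n` in the `N`-color multiset model:
sequences of parts, where a part of size `p ≥ 1` is a multiset of `p` balls
colored with `N` available colors. -/
noncomputable def multisetColorCount (N n : ℕ) : ℕ :=
  {l : List (Multiset (Fin N)) |
      (∀ m ∈ l, 0 < Multiset.card m) ∧ (l.map Multiset.card).sum = n}.ncard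

namespace MCC

def CSet (N n : ℕ) : Set (List (Multiset (Fin N))) :=
  {l | (∀ m ∈ l, 0 < Multiset.card m) ∧ (l.map Multiset.card).sum = n}

lemma mcc_eq (N n : ℕ) : multisetColorCount N n = (CSet N n).ncard := rfl

lemma cset_zero (N : ℕ) : CSet N 0 = {([] : List (Multiset (Fin N)))} := by
  ext l
  simp only [CSet, Set.mem_setOf_eq, Set.mem_singleton_iff]
  constructor
  · rintro ⟨h1, h2⟩
    cases l with
    | nil => rfl
    | cons m t =>
      simp only [List.map_cons, List.sum_cons] at h2
      have := h1 m List.mem_cons_self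
      omega
  · rintro rfl; simp

/-- multisets over `Fin N` of card `j+1`, as a Finset -/
def symFinset (N j : ℕ) : Finset (Multiset (Fin N)) :=
  (Finset.univ : Finset (Sym (Fin N) (j + 1))).image Sym.toMultiset

lemma mem_symFinset {N j : ℕ} {m : Multiset (Fin N)} :
    m ∈ symFinset N j ↔ Multiset.card m = j + 1 := by
  simp only [symFinset, Finset.mem_image, Finset.mem_univ, true_and]
  constructor
  · rintro ⟨s, rfl⟩; exact s.2
  · intro h; exact ⟨⟨m, h⟩, rfl⟩

/-- multisets of card between 1 and K -/
def partFinset (N K : ℕ) : Finset (Multiset (Fin N)) :=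
  (Finset.range K).biUnion (symFinset N)

lemma mem_partFinset {N K : ℕ} {m : Multiset (Fin N)} :
    m ∈ partFinset N K ↔ 1 ≤ Multiset.card m ∧ Multiset.card m ≤ K := by
  simp only [partFinset, Finset.mem_biUnion, Finset.mem_range, mem_symFinset]
  constructor
  · rintro ⟨j, hj, h⟩; omega
  · rintro ⟨h1, h2⟩; exact ⟨Multiset.card m - 1, by omega, by omega⟩

lemma cset_succ (N K : ℕ) :
    CSet N (K + 1) =
      ⋃ m ∈ partFinset N (K + 1),
        List.cons m '' CSet N (K + 1 - Multiset.card m) := by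
  ext l
  simp only [Set.mem_iUnion, Set.mem_image, exists_prop]
  constructor
  · rintro ⟨h1, h2⟩
    cases l with
    | nil => simp at h2
    | cons m t =>
      simp only [List.map_cons, List.sum_cons] at h2
      have hm : 0 < Multiset.card m := h1 m List.mem_cons_self
      refine ⟨m, mem_partFinset.2 ⟨by omega, by omega⟩, t,
        ⟨fun x hx => h1 x (List.mem_cons_of_mem _ hx), by omega⟩, rfl⟩
  · rintro ⟨m, hm, t, ⟨h1, h2⟩, rfl⟩
    have hm' := mem_partFinset.1 hm
    constructor
    · intro x hx
      rcases List.mem_cons.1 hx with rfl | hx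
      · omega
      · exact h1 x hx
    · simp only [List.map_cons, List.sum_cons]; omega

lemma cset_finite (N : ℕ) : ∀ n, (CSet N n).Finite := by
  intro n
  induction n using Nat.strong_induction_on with
  | _ n IH =>
    match n with
    | 0 => rw [cset_zero]; exact Set.finite_singleton _
    | K + 1 =>
      rw [cset_succ]
      refine Set.Finite.biUnion (Finset.finite_toSet _) fun m hm => ?_
      refine Set.Finite.image _ (IH _ ?_)
      have := mem_partFinset.1 (by simpa using hm)
      omega

lemma mcc_zero (N : ℕ) : multisetColorCount N 0 = 1 := by
  rw [mcc_eq, cset_zero, Set.ncard_singleton]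

lemma mcc_succ (N K : ℕ) :
    multisetColorCount N (K + 1) =
      ∑ j ∈ Finset.range (K + 1),
        Nat.multichoose N (j + 1) * multisetColorCount N (K - j) := by
  classical
  have hfin := cset_finite N
  -- Finset version of the decomposition
  have hF : (hfin (K + 1)).toFinset =
      (partFinset N (K + 1)).biUnion
        (fun m => ((hfin (K + 1 - Multiset.card m)).toFinset).image (List.cons m)) := by
    ext l
    simp only [Set.Finite.mem_toFinset, Finset.mem_biUnion, Finset.mem_image,
      Set.Finite.mem_toFinset, cset_succ N K, Set.mem_iUnion, Set.mem_image, exists_prop]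
  have hcard : ∀ n, multisetColorCount N n = ((hfin n).toFinset).card := by
    intro n; rw [mcc_eq, Set.ncard_eq_toFinset_card _ (hfin n)]
  rw [hcard, hF, Finset.card_biUnion]
  · rw [partFinset, Finset.sum_biUnion]
    · refine Finset.sum_congr rfl fun j hj => ?_
      rw [Finset.mem_range] at hj
      rw [symFinset, Finset.sum_image (by
        intro x _ y _ h
        exact Subtype.coe_injective h)]
      have : ∀ s : Sym (Fin N) (j + 1),
          (((hfin (K + 1 - Multiset.card (Sym.toMultiset s))).toFinset).image
            (List.cons (Sym.toMultiset s))).card = multisetColorCount N (K - j) := by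
        intro s
        rw [Finset.card_image_of_injective _ (List.cons_injective), ← hcard]
        congr 1
        have hs : Multiset.card (Sym.toMultiset s) = j + 1 := s.2
        omega
      rw [Finset.sum_congr rfl fun s _ => this s, Finset.sum_const, Finset.card_univ,
        Sym.card_sym_eq_multichoose, Fintype.card_fin, smul_eq_mul]
    · -- disjointness of symFinsets
      intro j hj j' hj' hne
      simp only [Function.onFun]
      rw [Finset.disjoint_left]
      intro m hm hm'
      rw [mem_symFinset] at hm hm'
      omega
  · intro m hm m' hm' hne
    rw [Function.onFun, Finset.disjoint_left]
    rintro l hl hl'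
    simp only [Finset.mem_image] at hl hl'
    obtain ⟨t, _, rfl⟩ := hl
    obtain ⟨t', _, he⟩ := hl'
    exact hne (List.head_eq_of_cons_eq he).symm

end MCC

open MCC Finset

section Analysis

variable {N : ℕ} (hN : 1 ≤ N)

lemma coeff_eq (j : ℕ) (hN : 1 ≤ N) :
    Nat.multichoose N (j + 1) = (j + 1 + N - 1).choose (N - 1) := by
  rw [Nat.multichoose_eq]
  rw [show N + (j + 1) - 1 = j + N by omega, show j + 1 + N - 1 = j + N by omega,
    show N - 1 = j + N - (j + 1) by omega, Nat.choose_symm (by omega)]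

lemma t_pos : (0 : ℝ) < (2 : ℝ) ^ (-(1 : ℝ) / N) :=
  Real.rpow_pos_of_pos two_pos _

lemma t_lt_one (hN : 1 ≤ N) : (2 : ℝ) ^ (-(1 : ℝ) / N) < 1 := by
  apply Real.rpow_lt_one_of_one_lt_of_neg one_lt_two
  have : (0 : ℝ) < N := by exact_mod_cast hN
  exact div_neg_of_neg_of_pos (by norm_num) this

lemma t_pow (hN : 1 ≤ N) : ((2 : ℝ) ^ (-(1 : ℝ) / N)) ^ N = 2⁻¹ := by
  have hNne : (N : ℝ) ≠ 0 := by positivity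
  rw [← Real.rpow_natCast ((2 : ℝ) ^ (-(1 : ℝ) / N)) N,
    ← Real.rpow_mul (by norm_num : (0:ℝ) ≤ 2)]
  rw [show (-(1 : ℝ) / N) * N = -1 by field_simp]
  rw [Real.rpow_neg_one]

lemma part4 (hN : 1 ≤ N) :
    (1 - (1 - (2 : ℝ) ^ (-(1 : ℝ) / N))) ^ (-(N : ℤ)) = 2 := by
  rw [show (1 - (1 - (2 : ℝ) ^ (-(1 : ℝ) / N))) = (2 : ℝ) ^ (-(1 : ℝ) / N) by ring]
  rw [zpow_neg, zpow_natCast, t_pow hN]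
  norm_num

lemma part5 (hN : 1 ≤ N) (y : ℝ) (hy : 0 < y) (hroot : ((1 : ℝ) - y) ^ (-(N : ℤ)) = 2) :
    1 - (2 : ℝ) ^ (-(1 : ℝ) / N) ≤ y := by
  by_contra h
  push_neg at h
  set t := (2 : ℝ) ^ (-(1 : ℝ) / N) with ht
  have h1 : t < 1 - y := by linarith
  have h2 : t ^ N < (1 - y) ^ N := by
    apply pow_lt_pow_left₀ h1 (le_of_lt t_pos)
    omega
  rw [t_pow hN] at h2
  rw [zpow_neg, zpow_natCast] at hroot
  have h3 : (0:ℝ) < (1 - y) ^ N := lt_trans (by norm_num) h2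
  have h4 : ((1 - y) ^ N)⁻¹ < (2⁻¹ : ℝ)⁻¹ := by
    apply inv_strictAnti₀ (by norm_num) h2
  rw [hroot] at h4
  norm_num at h4

/-- Part 1 as a HasSum. -/
lemma hasSum_P (hN : 1 ≤ N) {x : ℝ} (hx : |x| < 1) :
    HasSum (fun n : ℕ => ((n + 1 + N - 1).choose (N - 1) : ℝ) * x ^ (n + 1))
      ((1 - x) ^ (-(N : ℤ)) - 1) := by
  have h := hasSum_choose_mul_geometric_of_norm_lt_one (𝕜 := ℝ) (N - 1)
    (by rwa [Real.norm_eq_abs])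
  rw [show N - 1 + 1 = N by omega] at h
  have key : HasSum (fun n : ℕ => ((n + 1 + (N-1)).choose (N - 1) : ℝ) * x ^ (n + 1))
      ((1 / (1 - x) ^ N) - ∑ i ∈ Finset.range 1, ((i + (N-1)).choose (N - 1) : ℝ) * x ^ i) :=
    (hasSum_nat_add_iff' (f := fun n : ℕ => ((n + (N-1)).choose (N - 1) : ℝ) * x ^ n) 1).mpr h
  simp only [Finset.range_one, Finset.sum_singleton, Nat.zero_add, Nat.choose_self,
    Nat.cast_one, pow_zero, mul_one] at key
  have harith : ∀ n : ℕ, n + 1 + N - 1 = n + 1 + (N - 1) := fun n => by omega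
  have hzpow : (1 - x) ^ (-(N : ℤ)) = 1 / (1 - x) ^ N := by
    rw [zpow_neg, zpow_natCast, one_div]
  rw [hzpow]
  convert key using 2 with n
  rw [harith n]

variable (N) in
/-- `r = 1 - 2^{-1/N}` -/
noncomputable def rr : ℝ := 1 - (2 : ℝ) ^ (-(1 : ℝ) / N)

lemma rr_pos (hN : 1 ≤ N) : 0 < rr N := by
  have := t_lt_one (N := N) hN; unfold rr; linarith

lemma rr_lt_one : rr N < 1 := by
  have := t_pos (N := N); unfold rr; linarith

variable (N) in
/-- part weights at r -/
noncomputable def aa : ℕ → ℝ := fun k =>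
  if k = 0 then 0 else ((k + N - 1).choose (N - 1) : ℝ) * (rr N) ^ k

lemma aa_nonneg (hN : 1 ≤ N) (k : ℕ) : 0 ≤ aa N k := by
  unfold aa
  split
  · exact le_refl 0
  · exact mul_nonneg (Nat.cast_nonneg _) (pow_nonneg (rr_pos hN).le k)

lemma aa_succ (n : ℕ) : aa N (n + 1) = ((n + 1 + N - 1).choose (N - 1) : ℝ) * (rr N) ^ (n + 1) := by
  simp [aa]

lemma hasSum_aa_shift (hN : 1 ≤ N) :
    HasSum (fun n : ℕ => aa N (n + 1)) 1 := by
  have habs : |rr N| < 1 := by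
    rw [abs_of_pos (rr_pos hN)]; exact rr_lt_one
  have h := hasSum_P hN habs
  have hv : (1 - rr N) ^ (-(N : ℤ)) - 1 = 1 := by
    have h2 := part4 (N := N) hN
    unfold rr
    rw [h2]; norm_num
  rw [hv] at h
  simp only [aa_succ]
  exact h

lemma hasSum_aa (hN : 1 ≤ N) : HasSum (aa N) 1 := by
  have h := (hasSum_nat_add_iff (f := aa N) 1).mp (hasSum_aa_shift hN)
  simpa [aa] using h

variable (N) in
noncomputable def bb : ℕ → ℝ := fun n => (multisetColorCount N n : ℝ) * (rr N) ^ n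

lemma bb_nonneg (hN : 1 ≤ N) (n : ℕ) : 0 ≤ bb N n := by
  have := rr_pos (N := N) hN
  unfold bb; positivity

lemma bb_zero : bb N 0 = 1 := by simp [bb, mcc_zero]

/-- the renewal recurrence for `bb` -/
lemma bb_succ (hN : 1 ≤ N) (K : ℕ) :
    bb N (K + 1) = ∑ j ∈ Finset.range (K + 1), aa N (j + 1) * bb N (K - j) := by
  unfold bb
  rw [mcc_succ N K]
  push_cast
  rw [Finset.sum_mul]
  refine Finset.sum_congr rfl fun j hj => ?_
  rw [Finset.mem_range] at hj
  rw [aa_succ, coeff_eq j hN]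
  have hpow : (rr N) ^ (j + 1) * (rr N) ^ (K - j) = (rr N) ^ (K + 1) := by
    rw [← pow_add]
    congr 1
    omega
  rw [← hpow]
  ring

lemma conv_eq (hN : 1 ≤ N) (n : ℕ) :
    ∑ k ∈ Finset.range (n + 1), aa N k * bb N (n - k) =
      if n = 0 then 0 else bb N n := by
  cases n with
  | zero => simp [aa]
  | succ K =>
    rw [if_neg (Nat.succ_ne_zero K)]
    rw [Finset.sum_range_succ']
    have h0 : aa N 0 * bb N (K + 1 - 0) = 0 := by simp [aa]
    rw [h0, add_zero, bb_succ hN K]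
    refine Finset.sum_congr rfl fun j hj => ?_
    rw [show K + 1 - (j + 1) = K - j from by omega]

lemma bb_le_one (hN : 1 ≤ N) : ∀ n, bb N n ≤ 1 := by
  intro n
  induction n using Nat.strong_induction_on with
  | _ n IH =>
    match n with
    | 0 => rw [bb_zero]
    | K + 1 =>
      rw [bb_succ hN K]
      calc ∑ j ∈ Finset.range (K + 1), aa N (j + 1) * bb N (K - j)
          ≤ ∑ j ∈ Finset.range (K + 1), aa N (j + 1) := by
            apply Finset.sum_le_sum
            intro j hj
            have h1 := aa_nonneg hN (j + 1)
            have h2 : bb N (K - j) ≤ 1 := IH (K - j) (by omega)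
            nlinarith [bb_nonneg hN (K - j)]
        _ ≤ ∑' j : ℕ, aa N (j + 1) := by
            apply Summable.sum_le_tsum _ (fun i _ => aa_nonneg hN (i + 1))
              (hasSum_aa_shift hN).summable
        _ = 1 := (hasSum_aa_shift hN).tsum_eq

lemma part2 (hN : 1 ≤ N) (x : ℝ) (hx : |x| < rr N) :
    Summable (fun n : ℕ => (multisetColorCount N n : ℝ) * x ^ n) := by
  have hr := rr_pos (N := N) hN
  apply Summable.of_abs
  have hgeo : Summable (fun n : ℕ => (|x| / rr N) ^ n) :=
    summable_geometric_of_lt_one (by positivity) ((div_lt_one hr).mpr hx)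
  apply Summable.of_nonneg_of_le (fun n => abs_nonneg _) _ hgeo
  intro n
  rw [abs_mul, abs_pow, abs_of_nonneg (by positivity : (0:ℝ) ≤ (multisetColorCount N n : ℝ))]
  rw [div_pow, le_div_iff₀ (by positivity)]
  calc (multisetColorCount N n : ℝ) * |x| ^ n * rr N ^ n
      = bb N n * |x| ^ n := by unfold bb; ring
    _ ≤ 1 * |x| ^ n := by
        apply mul_le_mul_of_nonneg_right (bb_le_one hN n) (by positivity)
    _ = |x| ^ n := one_mul _

lemma part3 (hN : 1 ≤ N) (x : ℝ) (hx : rr N ≤ x) :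
    ¬ Summable (fun n : ℕ => (multisetColorCount N n : ℝ) * x ^ n) := by
  intro hsum
  have hr := rr_pos (N := N) hN
  have hb : Summable (bb N) := by
    apply Summable.of_nonneg_of_le (bb_nonneg hN) _ hsum
    intro n
    unfold bb
    apply mul_le_mul_of_nonneg_left _ (by positivity)
    exact pow_le_pow_left₀ (le_of_lt hr) hx n
  have ha : Summable (aa N) := (hasSum_aa hN).summable
  have hanorm : Summable (fun n => ‖aa N n‖) := by
    simp only [Real.norm_eq_abs]
    refine ha.congr fun n => ?_
    rw [abs_of_nonneg (aa_nonneg hN n)]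
  have hbnorm : Summable (fun n => ‖bb N n‖) := by
    simp only [Real.norm_eq_abs]
    refine hb.congr fun n => ?_
    rw [abs_of_nonneg (bb_nonneg hN n)]
  have hcauchy := tsum_mul_tsum_eq_tsum_sum_range_of_summable_norm hanorm hbnorm
  rw [(hasSum_aa hN).tsum_eq, one_mul] at hcauchy
  have hconv : ∑' n : ℕ, ∑ k ∈ Finset.range (n + 1), aa N k * bb N (n - k)
      = ∑' n : ℕ, (if n = 0 then 0 else bb N n) := tsum_congr (conv_eq hN)
  have hd : Summable (fun n : ℕ => if n = 0 then 0 else bb N n) := by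
    apply Summable.of_nonneg_of_le _ _ hb
    · intro n; by_cases h : n = 0 <;> simp [h, bb_nonneg hN]
    · intro n; by_cases h : n = 0 <;> simp [h, bb_nonneg hN]
  have e1 : ∑' n : ℕ, (if n = 0 then 0 else bb N n) = ∑' n : ℕ, bb N (n + 1) := by
    rw [Summable.tsum_eq_zero_add hd]
    simp
  have e2 : ∑' n : ℕ, bb N n = 1 + ∑' n : ℕ, bb N (n + 1) := by
    rw [Summable.tsum_eq_zero_add hb, bb_zero]
  rw [hconv, e1] at hcauchy
  rw [e2] at hcauchy
  linarith [hcauchy]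

end Analysis


/-- The part generating function is `P(z) = (1-z)^{-N} - 1`, and the radius of
convergence of the sequence generating function `1/(1-P(z))` is
`r = 1 - 2^{-1/N}`, the smallest positive root of `(1-z)^{-N} = 2`. -/
theorem multiset_color_gf (N : ℕ) (hN : 1 ≤ N) :
    (∀ x : ℝ, |x| < 1 →
      (∑' n : ℕ, ((n + 1 + N - 1).choose (N - 1) : ℝ) * x ^ (n + 1))
        = (1 - x) ^ (-(N : ℤ)) - 1)
    ∧ (∀ x : ℝ, |x| < 1 - (2 : ℝ) ^ (-(1 : ℝ) / N) →
        Summable (fun n : ℕ => (multisetColorCount N n : ℝ) * x ^ n))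
    ∧ (∀ x : ℝ, 1 - (2 : ℝ) ^ (-(1 : ℝ) / N) ≤ x →
        ¬ Summable (fun n : ℕ => (multisetColorCount N n : ℝ) * x ^ n))
    ∧ (1 - (1 - (2 : ℝ) ^ (-(1 : ℝ) / N))) ^ (-(N : ℤ)) = 2
    ∧ (∀ y : ℝ, 0 < y → ((1 : ℝ) - y) ^ (-(N : ℤ)) = 2 →
        1 - (2 : ℝ) ^ (-(1 : ℝ) / N) ≤ y) := by
  refine ⟨fun x hx => (hasSum_P hN hx).tsum_eq,
    fun x hx => part2 hN x (by simpa [rr] using hx),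
    fun x hx => by simpa [rr] using part3 hN x (by simpa [rr] using hx),
    part4 hN, fun y hy h => part5 hN y hy h⟩
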